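/- Let p be a prime, q a positive integer divisible by p, m ≥ 3, and take δ = 0 in the stated construction, so that the sequences a^t_σ of length p^m are indexed by σ, t ∈ {0,…,p^k−1}. Then the collection {A^0, …, A^{p^k−1}} with A^t = {a^t_0,…,a^t_{p^k−1}} is a (p^k, p^k, p^m)-CCC; that is: (i) for every t, Σ_{σ=0}^{p^k−1} A(a^t_σ)(0) = p^{k+m} and Σ_{σ=0}^{p^k−1} A(a^t_σ)(τ) = 0 for all τ with 1 ≤ |τ| ≤ p^m−1; and (ii) for all t₁ ≠ t₂, Σ_{σ=0}^{p^k−1} C(a^{t₁}_σ, a^{t₂}_σ)(τ) = 0 for all τ with |τ| ≤ p^m−1. -/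

import Mathlib

open Finset

/-- `i`-th (1-based) base-`p` digit of `r`, i.e. `r_i` where `r = Σ_i r_i p^(i-1)`. -/
def dig (p r i : ℕ) : ℕ := r / p ^ (i - 1) % p

/-- `ω_q^x = exp(2π√-1·x/q)` for `x ∈ ℤ_q`. -/
noncomputable def eomega (q : ℕ) (x : ZMod q) : ℂ :=
  Complex.exp (2 * Real.pi * Complex.I * (x.val : ℂ) / (q : ℂ))

/-- Aperiodic cross-correlation of two length-`N` `ℤ_q`-valued sequences at integer shift `τ`. -/
noncomputable def ccorr (q N : ℕ) (u v : ℕ → ZMod q) (τ : ℤ) : ℂ :=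
  if 0 ≤ τ then ∑ i ∈ Finset.range (N - τ.toNat), eomega q (u i - v (i + τ.toNat))
  else ∑ i ∈ Finset.range (N - (-τ).toNat), eomega q (u (i + (-τ).toNat) - v i)

/-- Aperiodic autocorrelation. -/
noncomputable def acorr (q N : ℕ) (u : ℕ → ZMod q) (τ : ℤ) : ℂ := ccorr q N u u τ

/-- Entry `a^t_{σ,r}` of the construction: with `(r_1,…,r_m)` the `p`-ary digits of `r`,
`a^t_σ(r) = (q/p) Σ_β Σ_γ r_{π_β(γ)} r_{π_β(γ+1)} + Σ_l λ_l r_l + λ_0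
 + (q/p)(Σ_β σ_β r_{π_β(1)} + Σ_β t_β r_{π_β(m_β)} + Σ_β t_{k+β} r_{m-δ+β})`. -/
def aseq (p q m δ k : ℕ) (mcard : ℕ → ℕ) (pmap : ℕ → ℕ → ℕ) (lam : ℕ → ZMod q)
    (t σ r : ℕ) : ZMod q :=
  (((q / p) * ∑ β ∈ Finset.Icc 1 k, ∑ γ ∈ Finset.Icc 1 (mcard β - 1),
      dig p r (pmap β γ) * dig p r (pmap β (γ + 1)) : ℕ) : ZMod q)
  + ∑ l ∈ Finset.Icc 1 m, lam l * (dig p r l : ZMod q) + lam 0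
  + (((q / p) * (∑ β ∈ Finset.Icc 1 k, dig p σ β * dig p r (pmap β 1)
      + ∑ β ∈ Finset.Icc 1 k, dig p t β * dig p r (pmap β (mcard β))
      + ∑ β ∈ Finset.Icc 1 δ, dig p t (k + β) * dig p r (m - δ + β)) : ℕ) : ZMod q)


/-- Replace the (1-based) `l`-th digit of `r` by `v`. -/
def updig (p r l v : ℕ) : ℕ := r % p ^ (l - 1) + v * p ^ (l - 1) + r / p ^ l * p ^ l

section digits
variable {p : ℕ}

lemma sub_one_mul_add {p : ℕ} (hp : 0 < p) (x : ℕ) : (p - 1) * x + x = p * x := by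
  rw [Nat.sub_one_mul]
  have : x ≤ p * x := Nat.le_mul_of_pos_left x hp
  omega

lemma dig_lt (hp : 0 < p) (r l : ℕ) : dig p r l < p := Nat.mod_lt _ hp

lemma dig_zero (hp : 0 < p) (l : ℕ) : dig p 0 l = 0 := by simp [dig]

lemma dig_decomp (r l : ℕ) (hl : 1 ≤ l) :
    r = r % p ^ (l - 1) + dig p r l * p ^ (l - 1) + r / p ^ l * p ^ l := by
  obtain ⟨n, rfl⟩ : ∃ n, l = n + 1 := ⟨l - 1, by omega⟩
  simp only [Nat.add_sub_cancel, dig]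
  have hD : r % (p ^ n * p) / p ^ n = r / p ^ n % p := Nat.mod_mul_right_div_self r (p^n) p
  have hC : r % (p ^ n * p) % p ^ n = r % p ^ n := Nat.mod_mod_of_dvd r ⟨p, rfl⟩
  have hB := Nat.mod_add_div (r % (p ^ n * p)) (p ^ n)
  have hA := Nat.mod_add_div r (p ^ n * p)
  rw [hC, hD] at hB
  rw [pow_succ]
  conv_lhs => rw [← hA]
  conv_lhs => rw [← hB]
  ring

lemma dig_tech_self (hp : 0 < p) (a v e n : ℕ) (ha : a < p ^ n) (hv : v < p) :
    dig p (a + v * p ^ n + e * p ^ (n + 1)) (n + 1) = v := by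
  have h1 : a + v * p ^ n + e * p ^ (n + 1) = a + p ^ n * (v + p * e) := by ring
  rw [dig, Nat.add_sub_cancel, h1, Nat.add_mul_div_left _ _ (pow_pos hp n),
    Nat.div_eq_of_lt ha, zero_add]
  have h2 : v + p * e = v + e * p := by ring
  rw [h2, Nat.add_mul_mod_self_right, Nat.mod_eq_of_lt hv]

lemma dig_tech_low (hp : 0 < p) (a w l n : ℕ) (hl : 1 ≤ l) (hll : l ≤ n) :
    dig p (a + w * p ^ n) l = dig p a l := by
  obtain ⟨i, rfl⟩ : ∃ i, l = i + 1 := ⟨l - 1, by omega⟩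
  have h1 : a + w * p ^ n = a + p ^ i * (w * p ^ (n - i - 1) * p) := by
    have : p ^ n = p ^ i * (p ^ (n - i - 1) * p) := by
      rw [← pow_succ, ← pow_add]; congr 1; omega
    rw [this]; ring
  rw [dig, Nat.add_sub_cancel, h1, Nat.add_mul_div_left _ _ (pow_pos hp i),
    Nat.add_mul_mod_self_right, dig, Nat.add_sub_cancel]

lemma dig_tech_high (hp : 0 < p) (y e n l : ℕ) (hy : y < p ^ (n + 1)) (hl : n + 2 ≤ l) :
    dig p (y + e * p ^ (n + 1)) l = dig p e (l - (n + 1)) := by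
  have h1 : (y + e * p ^ (n + 1)) / p ^ (n + 1) = e := by
    rw [Nat.add_mul_div_right _ _ (pow_pos hp (n + 1)), Nat.div_eq_of_lt hy, zero_add]
  have h2 : p ^ (l - 1) = p ^ (n + 1) * p ^ (l - 1 - (n + 1)) := by
    rw [← pow_add]; congr 1; omega
  rw [dig, h2, ← Nat.div_div_eq_div_mul, h1, dig]
  have h3 : l - 1 - (n + 1) = l - (n + 1) - 1 := by omega
  rw [h3]

lemma updig_mod (r l v : ℕ) : updig p r l v % p ^ (l - 1) = r % p ^ (l - 1) := by
  have h1 : updig p r l v = r % p ^ (l - 1) + p ^ (l - 1) * (v + r / p ^ l * p ^ (l - (l - 1))) := by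
    rw [updig]
    have : p ^ l = p ^ (l - 1) * p ^ (l - (l - 1)) := by rw [← pow_add]; congr 1; omega
    rw [this]; ring
  rw [h1, Nat.add_mul_mod_self_left]
  exact Nat.mod_mod_of_dvd r dvd_rfl

lemma updig_div (hp : 0 < p) (r l v : ℕ) (hl : 1 ≤ l) (hv : v < p) :
    updig p r l v / p ^ l = r / p ^ l := by
  rw [updig]
  have hy : r % p ^ (l - 1) + v * p ^ (l - 1) < p ^ l := by
    have h1 : r % p ^ (l - 1) < p ^ (l - 1) := Nat.mod_lt _ (pow_pos hp _)
    have h2 : p ^ l = p * p ^ (l - 1) := by rw [← pow_succ']; congr 1; omega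
    have h3 : v * p ^ (l - 1) ≤ (p - 1) * p ^ (l - 1) := Nat.mul_le_mul_right _ (by omega)
    have h4 := sub_one_mul_add hp (p ^ (l - 1))
    omega
  rw [Nat.add_mul_div_right _ _ (pow_pos hp l), Nat.div_eq_of_lt hy, zero_add]

lemma updig_eq_self (r l : ℕ) (hl : 1 ≤ l) : updig p r l (dig p r l) = r :=
  (dig_decomp r l hl).symm

lemma dig_updig_self (hp : 0 < p) (r l v : ℕ) (hl : 1 ≤ l) (hv : v < p) :
    dig p (updig p r l v) l = v := by
  obtain ⟨n, rfl⟩ : ∃ n, l = n + 1 := ⟨l - 1, by omega⟩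
  rw [updig, Nat.add_sub_cancel]
  exact dig_tech_self hp (r % p ^ n) v (r / p ^ (n+1)) n (Nat.mod_lt _ (pow_pos hp n)) hv

lemma dig_updig_ne (hp : 0 < p) (r l l' v : ℕ) (hl : 1 ≤ l) (hl' : 1 ≤ l') (hne : l' ≠ l)
    (hv : v < p) : dig p (updig p r l v) l' = dig p r l' := by
  obtain ⟨n, rfl⟩ : ∃ n, l = n + 1 := ⟨l - 1, by omega⟩
  have ha : r % p ^ n < p ^ n := Nat.mod_lt _ (pow_pos hp n)
  have hd : dig p r (n + 1) < p := dig_lt hp r (n + 1)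
  rcases Nat.lt_or_ge l' (n + 1) with h | h
  · rw [updig, Nat.add_sub_cancel]
    have h1 : r % p ^ n + v * p ^ n + r / p ^ (n+1) * p ^ (n+1)
        = r % p ^ n + (v + r / p ^ (n+1) * p) * p ^ n := by
      rw [pow_succ]; ring
    have hdd := dig_decomp (p := p) r (n+1) (by omega)
    simp only [Nat.add_sub_cancel] at hdd
    have h2 : r = r % p ^ n + (dig p r (n+1) + r / p ^ (n+1) * p) * p ^ n := by
      have hexp : r % p ^ n + (dig p r (n+1) + r / p ^ (n+1) * p) * p ^ n
          = r % p ^ n + dig p r (n+1) * p ^ n + r / p ^ (n+1) * p ^ (n+1) := by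
        rw [pow_succ]; ring
      rw [hexp]; exact hdd
    have hr2 : dig p (r % p ^ n + (dig p r (n+1) + r / p ^ (n+1) * p) * p ^ n) l'
        = dig p (r % p ^ n) l' :=
      dig_tech_low hp (r % p ^ n) (dig p r (n+1) + r / p ^ (n+1) * p) l' n hl' (by omega)
    rw [← h2] at hr2
    rw [h1, dig_tech_low hp (r % p ^ n) (v + r / p ^ (n+1) * p) l' n hl' (by omega)]
    exact hr2.symm
  · have h' : n + 2 ≤ l' := by omega
    rw [updig, Nat.add_sub_cancel]
    have hy1 : r % p ^ n + v * p ^ n < p ^ (n + 1) := by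
      have h5 : v * p ^ n ≤ (p - 1) * p ^ n := Nat.mul_le_mul_right _ (by omega)
      have hps : p ^ (n+1) = p * p ^ n := pow_succ' p n
      have h6 := sub_one_mul_add hp (p ^ n)
      omega
    have hy2 : r % p ^ n + dig p r (n+1) * p ^ n < p ^ (n + 1) := by
      have h5 : dig p r (n+1) * p ^ n ≤ (p - 1) * p ^ n := Nat.mul_le_mul_right _ (by omega)
      have hps : p ^ (n+1) = p * p ^ n := pow_succ' p n
      have h6 := sub_one_mul_add hp (p ^ n)
      omega
    have hr2 : dig p (r % p ^ n + dig p r (n+1) * p ^ n + r / p ^ (n+1) * p ^ (n+1)) l'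
        = dig p (r / p ^ (n+1)) (l' - (n+1)) :=
      dig_tech_high hp (r % p ^ n + dig p r (n+1) * p ^ n) (r / p ^ (n+1)) n l' hy2 h'
    have hdec : r % p ^ n + dig p r (n+1) * p ^ n + r / p ^ (n+1) * p ^ (n+1) = r := by
      have hdd := dig_decomp (p := p) r (n+1) (by omega)
      simp only [Nat.add_sub_cancel] at hdd
      exact hdd.symm
    rw [hdec] at hr2
    rw [dig_tech_high hp (r % p ^ n + v * p ^ n) (r / p ^ (n+1)) n l' hy1 h']
    exact hr2.symm

lemma updig_updig (hp : 0 < p) (r l v w : ℕ) (hl : 1 ≤ l) (hv : v < p) :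
    updig p (updig p r l v) l w = updig p r l w := by
  rw [updig, updig_mod, updig_div hp r l v hl hv, updig]

lemma updig_lt (hp : 0 < p) {m r l v : ℕ} (hr : r < p ^ m) (hl : 1 ≤ l) (hlm : l ≤ m)
    (hv : v < p) : updig p r l v < p ^ m := by
  rw [updig]
  have h1 : r % p ^ (l - 1) + v * p ^ (l - 1) < p ^ l := by
    have ha : r % p ^ (l - 1) < p ^ (l - 1) := Nat.mod_lt _ (pow_pos hp _)
    have h3 : v * p ^ (l - 1) ≤ (p - 1) * p ^ (l - 1) := Nat.mul_le_mul_right _ (by omega)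
    have h2 : p ^ l = p * p ^ (l - 1) := by rw [← pow_succ']; congr 1; omega
    have h4 := sub_one_mul_add hp (p ^ (l - 1))
    omega
  have h2 : r / p ^ l < p ^ (m - l) := by
    apply Nat.div_lt_of_lt_mul
    have : p ^ l * p ^ (m - l) = p ^ m := by rw [← pow_add]; congr 1; omega
    omega
  calc r % p ^ (l - 1) + v * p ^ (l - 1) + r / p ^ l * p ^ l
      < p ^ l + r / p ^ l * p ^ l := by omega
    _ = (1 + r / p ^ l) * p ^ l := by ring
    _ ≤ p ^ (m - l) * p ^ l := Nat.mul_le_mul_right _ (by omega)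
    _ = p ^ m := by rw [← pow_add]; congr 1; omega

lemma updig_add_dig (r l v : ℕ) (hl : 1 ≤ l) :
    updig p r l v + dig p r l * p ^ (l - 1) = r + v * p ^ (l - 1) := by
  have h := dig_decomp (p := p) r l hl
  rw [updig]; omega

lemma eq_of_dig_eq (hp : 0 < p) (m : ℕ) : ∀ r s : ℕ, r < p ^ m → s < p ^ m →
    (∀ l ∈ Icc 1 m, dig p r l = dig p s l) → r = s := by
  induction m with
  | zero => intro r s hr hs _; simp at hr hs; omega
  | succ n ih =>
    intro r s hr hs h
    have h0 : r % p = s % p := by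
      have := h 1 (by simp)
      simpa [dig] using this
    have hih : r / p = s / p := by
      apply ih
      · apply Nat.div_lt_of_lt_mul; rw [← pow_succ']; exact hr
      · apply Nat.div_lt_of_lt_mul; rw [← pow_succ']; exact hs
      · intro l hl
        obtain ⟨i, rfl⟩ : ∃ i, l = i + 1 := ⟨l - 1, by simp at hl; omega⟩
        have hh := h (i + 2) (by simp at hl ⊢; omega)
        have e1 : i + 2 - 1 = i + 1 := by omega
        simp only [dig, Nat.add_sub_cancel, e1] at hh ⊢
        rw [Nat.div_div_eq_div_mul, Nat.div_div_eq_div_mul, ← pow_succ'] at *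
        exact hh
    calc r = p * (r / p) + r % p := (Nat.div_add_mod r p).symm
      _ = p * (s / p) + s % p := by rw [hih, h0]
      _ = s := Nat.div_add_mod s p

end digits


section eomega
variable {q : ℕ}

lemma eomega_natCast (hq : 0 < q) (n : ℕ) : eomega q (n : ZMod q) = Complex.exp (2 * Real.pi * Complex.I * (n : ℂ) / (q : ℂ)) := by
  haveI : NeZero q := ⟨hq.ne'⟩
  have hval : ((n : ZMod q)).val = n % q := ZMod.val_natCast q n
  rw [eomega, hval]
  have hn : ((n : ℂ)) = ((n % q + q * (n / q) : ℕ) : ℂ) := by rw [Nat.mod_add_div]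
  rw [hn]
  have hqc : (q : ℂ) ≠ 0 := by exact_mod_cast hq.ne'
  have h2 : 2 * Real.pi * Complex.I * ((n % q + q * (n / q) : ℕ) : ℂ) / q
      = 2 * Real.pi * Complex.I * (n % q : ℕ) / q + (n / q : ℕ) * (2 * Real.pi * Complex.I) := by
    push_cast
    field_simp
  rw [h2, Complex.exp_add]
  have h3 : Complex.exp ((n / q : ℕ) * (2 * Real.pi * Complex.I)) = 1 := by
    have := Complex.exp_int_mul_two_pi_mul_I (n / q : ℕ)
    simpa using this
  rw [h3, mul_one]

lemma eomega_zero : eomega q 0 = 1 := by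
  simp [eomega, ZMod.val_zero]

lemma eomega_add (hq : 0 < q) (x y : ZMod q) : eomega q (x + y) = eomega q x * eomega q y := by
  haveI : NeZero q := ⟨hq.ne'⟩
  have hx : ((x.val : ℕ) : ZMod q) = x := by simp [ZMod.natCast_val, ZMod.cast_id]
  have hy : ((y.val : ℕ) : ZMod q) = y := by simp [ZMod.natCast_val, ZMod.cast_id]
  have h1 : x + y = ((x.val + y.val : ℕ) : ZMod q) := by push_cast [hx, hy]; ring
  rw [h1, eomega_natCast hq]
  nth_rewrite 2 [← hx]
  nth_rewrite 2 [← hy]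
  rw [eomega_natCast hq, eomega_natCast hq, ← Complex.exp_add]
  congr 1
  push_cast
  ring

lemma eomega_ne_zero (x : ZMod q) : eomega q x ≠ 0 := Complex.exp_ne_zero _

lemma eomega_nsmul (hq : 0 < q) (n : ℕ) (x : ZMod q) : eomega q (n • x) = (eomega q x) ^ n := by
  induction n with
  | zero => simpa using eomega_zero (q := q)
  | succ j ih => rw [succ_nsmul, eomega_add hq, ih, pow_succ]

lemma eomega_sub (hq : 0 < q) (x y : ZMod q) : eomega q (x - y) = eomega q x * (eomega q y)⁻¹ := by
  have hy := eomega_ne_zero (q := q) y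
  field_simp
  rw [← eomega_add hq, sub_add_cancel]

lemma eomega_eq_one_iff (hq : 0 < q) (x : ZMod q) : eomega q x = 1 ↔ x = 0 := by
  haveI : NeZero q := ⟨hq.ne'⟩
  constructor
  · intro h
    rw [eomega, Complex.exp_eq_one_iff] at h
    obtain ⟨n, hn⟩ := h
    have hqc : (q : ℂ) ≠ 0 := by exact_mod_cast hq.ne'
    have hpi : (Real.pi : ℂ) ≠ 0 := by exact_mod_cast Real.pi_ne_zero
    have h2πI : (2 * Real.pi * Complex.I : ℂ) ≠ 0 := by
      simp [hpi, Complex.I_ne_zero]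
    have hn2 : 2 * Real.pi * Complex.I * (x.val : ℂ) = (n : ℂ) * (2 * Real.pi * Complex.I) * q := by
      have h4 := congrArg (fun z => z * (q : ℂ)) hn
      rw [div_mul_cancel₀ _ hqc] at h4
      exact h4
    have hv : (x.val : ℂ) = (n : ℂ) * (q : ℂ) := by
      apply mul_left_cancel₀ h2πI
      linear_combination hn2
    have hv' : (x.val : ℤ) = n * q := by exact_mod_cast hv
    have hdvd : (q : ℤ) ∣ (x.val : ℤ) := ⟨n, by linarith [hv']⟩
    have hdvd' : q ∣ x.val := by exact_mod_cast hdvd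
    have h0 := Nat.eq_zero_of_dvd_of_lt hdvd' (ZMod.val_lt x)
    exact (ZMod.val_eq_zero x).mp h0
  · rintro rfl; exact eomega_zero

lemma eomega_conj (hq : 0 < q) (x : ZMod q) :
    (starRingEnd ℂ) (eomega q x) = eomega q (-x) := by
  have habs : ‖eomega q x‖ = 1 := by
    rw [eomega]
    have : 2 * Real.pi * Complex.I * (x.val : ℂ) / q = ((2 * Real.pi * x.val / q : ℝ) : ℂ) * Complex.I := by
      push_cast; ring
    rw [this, Complex.norm_exp_ofReal_mul_I]
  have hmul : eomega q x * eomega q (-x) = 1 := by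
    rw [← eomega_add hq, add_neg_cancel, eomega_zero]
  have hconj : eomega q x * (starRingEnd ℂ) (eomega q x) = 1 := by
    rw [mul_comm, ← Complex.normSq_eq_conj_mul_self]
    rw [← Complex.sq_norm, habs]; norm_num
  have hne := eomega_ne_zero (q := q) x
  have h1 : (starRingEnd ℂ) (eomega q x) = (eomega q x)⁻¹ := by
    field_simp [hne] at hconj ⊢
    linear_combination hconj
  have h2 : eomega q (-x) = (eomega q x)⁻¹ := by
    field_simp [hne] at hmul ⊢
    linear_combination hmul
  rw [h1, h2]

end eomega

section sums
variable {p q : ℕ}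

lemma sum_pow_root_eq_zero (hp : 0 < p) (w : ℂ) (hw : w ^ p = 1) (h1 : w ≠ 1) :
    ∑ v ∈ range p, w ^ v = 0 := by
  have h := geom_sum_mul w p
  rw [hw, sub_self] at h
  rcases mul_eq_zero.mp h with h' | h'
  · exact h'
  · exact absurd (by linear_combination h' : w = 1) h1

lemma cmul_ne_zero (hp : 0 < p) (hq : 0 < q) (hpq : p ∣ q) {a b : ℕ} (ha : a < p) (hb : b < p)
    (hab : a ≠ b) : ((q / p : ℕ) : ZMod q) * ((a : ZMod q) - (b : ZMod q)) ≠ 0 := by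
  intro h
  have hc : 0 < q / p := Nat.div_pos (Nat.le_of_dvd hq hpq) hp
  have h2 : ((q / p * a : ℕ) : ZMod q) = ((q / p * b : ℕ) : ZMod q) := by
    push_cast
    linear_combination h
  have h3 : (q / p) * a ≡ (q / p) * b [MOD q] := (ZMod.natCast_eq_natCast_iff _ _ _).mp h2
  have h4 : (q : ℤ) ∣ ((q / p) * b : ℕ) - ((q / p) * a : ℕ) := (Nat.modEq_iff_dvd).mp h3
  have hq' : (q : ℤ) = ((q / p : ℕ) : ℤ) * (p : ℤ) := by
    exact_mod_cast (Nat.div_mul_cancel hpq).symm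
  rw [hq'] at h4
  have h5 : ((q / p : ℕ) : ℤ) * ((b : ℤ) - (a : ℤ)) = ((q / p) * b : ℕ) - ((q / p) * a : ℕ) := by
    push_cast; ring
  rw [← h5] at h4
  have h6 : (p : ℤ) ∣ ((b : ℤ) - (a : ℤ)) := by
    rcases h4 with ⟨e, he⟩
    refine ⟨e, ?_⟩
    have hc' : ((q / p : ℕ) : ℤ) ≠ 0 := by exact_mod_cast hc.ne'
    apply mul_left_cancel₀ hc'
    rw [he]; ring
  rcases h6 with ⟨e, he⟩
  have : (b : ℤ) - a = 0 := by
    rcases lt_trichotomy e 0 with h' | h' | h'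
    · nlinarith [ha, hb, (by exact_mod_cast hp : (0:ℤ) < p)]
    · rw [h', mul_zero] at he; exact he
    · nlinarith [ha, hb, (by exact_mod_cast hp : (0:ℤ) < p)]
  have : a = b := by omega
  exact hab this

lemma sum_w (hp : 0 < p) (hq : 0 < q) (hpq : p ∣ q) (a b : ℕ) (ha : a < p) (hb : b < p) :
    ∑ v ∈ range p, (eomega q (((q / p : ℕ) : ZMod q) * ((a : ZMod q) - (b : ZMod q)))) ^ v
      = if a = b then (p : ℂ) else 0 := by
  by_cases hab : a = b
  · subst hab
    simp [sub_self, mul_zero, eomega_zero]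
  · rw [if_neg hab]
    apply sum_pow_root_eq_zero hp
    · rw [← eomega_nsmul hq]
      have : p • (((q / p : ℕ) : ZMod q) * ((a : ZMod q) - (b : ZMod q))) = 0 := by
        rw [nsmul_eq_mul]
        have : (p : ZMod q) * ((q / p : ℕ) : ZMod q) = ((p * (q / p) : ℕ) : ZMod q) := by
          push_cast; ring
        rw [← mul_assoc, this, Nat.mul_div_cancel' hpq, ZMod.natCast_self, zero_mul]
      rw [this, eomega_zero]
    · rw [Ne, eomega_eq_one_iff hq]
      exact cmul_ne_zero hp hq hpq ha hb hab

lemma sum_orbit_zero (hp : 0 < p) (hq : 0 < q) (hpq : p ∣ q) (x : ZMod q) (a b d : ℕ)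
    (ha : a < p) (hb : b < p) (hab : a ≠ b) (G : ℕ → ZMod q)
    (hG : ∀ v < p, G v = x + ((q / p : ℕ) : ZMod q) * (((v : ZMod q) - (d : ZMod q)) * ((a : ZMod q) - (b : ZMod q)))) :
    ∑ v ∈ range p, eomega q (G v) = 0 := by
  have key : ∀ v < p, eomega q (G v)
      = (eomega q (x - (d : ZMod q) * (((q / p : ℕ) : ZMod q) * ((a : ZMod q) - (b : ZMod q)))))
        * (eomega q (((q / p : ℕ) : ZMod q) * ((a : ZMod q) - (b : ZMod q)))) ^ v := by
    intro v hv
    rw [hG v hv, ← eomega_nsmul hq, ← eomega_add hq]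
    congr 1
    rw [nsmul_eq_mul]
    ring
  rw [Finset.sum_congr rfl (fun v hv => key v (Finset.mem_range.mp hv)), ← Finset.mul_sum]
  rw [sum_w hp hq hpq a b ha hb, if_neg hab, mul_zero]

lemma sum_digits_prod (hp : 0 < p) (k : ℕ) (f : ℕ → ℕ → ℂ) :
    ∑ σ ∈ range (p ^ k), ∏ β ∈ Icc 1 k, f β (dig p σ β)
      = ∏ β ∈ Icc 1 k, ∑ v ∈ range p, f β v := by
  induction k with
  | zero => simp
  | succ n ih =>
    have hicc : Icc 1 (n + 1) = insert (n + 1) (Icc 1 n) := by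
      ext x; simp [Finset.mem_Icc, Finset.mem_insert]; omega
    have hnotmem : (n + 1) ∉ Icc 1 n := by simp
    rw [hicc, Finset.prod_insert hnotmem]
    have hbij : ∑ σ ∈ range (p ^ (n + 1)), ∏ β ∈ insert (n+1) (Icc 1 n), f β (dig p σ β)
        = ∑ ab ∈ range (p ^ n) ×ˢ range p, ∏ β ∈ insert (n+1) (Icc 1 n), f β (dig p (ab.1 + ab.2 * p ^ n) β) := by
      apply Finset.sum_nbij' (fun σ => (σ % p ^ n, σ / p ^ n)) (fun ab => ab.1 + ab.2 * p ^ n)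
      · intro σ hσ
        simp only [Finset.mem_range] at hσ
        simp only [Finset.mem_product, Finset.mem_range]
        constructor
        · exact Nat.mod_lt _ (pow_pos hp n)
        · apply Nat.div_lt_of_lt_mul; rw [← pow_succ]; exact hσ
      · intro ab hab
        simp only [Finset.mem_product, Finset.mem_range] at hab
        simp only [Finset.mem_range]
        have h4 := sub_one_mul_add (pow_pos hp n) 1
        have h5 : ab.2 * p ^ n ≤ (p - 1) * p ^ n := Nat.mul_le_mul_right _ (by omega)
        have h6 := sub_one_mul_add hp (p ^ n)
        have h7 : p ^ (n+1) = p * p ^ n := pow_succ' p n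
        omega
      · intro σ _; exact Nat.mod_add_div' σ (p ^ n)
      · intro ab hab
        simp only [Finset.mem_product, Finset.mem_range] at hab
        have h1 : (ab.1 + ab.2 * p ^ n) % p ^ n = ab.1 := by
          rw [Nat.add_mul_mod_self_right, Nat.mod_eq_of_lt hab.1]
        have h2 : (ab.1 + ab.2 * p ^ n) / p ^ n = ab.2 := by
          rw [Nat.add_mul_div_right _ _ (pow_pos hp n), Nat.div_eq_of_lt hab.1, zero_add]
        rw [h1, h2]
      · intro σ _
        congr 1
        apply funext; intro β
        congr 1
        rw [Nat.mod_add_div' σ (p ^ n)]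
    rw [hbij]
    have hterm : ∀ ab ∈ range (p ^ n) ×ˢ range p,
        ∏ β ∈ insert (n+1) (Icc 1 n), f β (dig p (ab.1 + ab.2 * p ^ n) β)
        = f (n+1) ab.2 * ∏ β ∈ Icc 1 n, f β (dig p ab.1 β) := by
      intro ab hab
      simp only [Finset.mem_product, Finset.mem_range] at hab
      rw [Finset.prod_insert hnotmem]
      have h1 : dig p (ab.1 + ab.2 * p ^ n) (n + 1) = ab.2 := by
        have := dig_tech_self hp ab.1 ab.2 0 n hab.1 hab.2
        simpa using this
      rw [h1]
      congr 1
      apply Finset.prod_congr rfl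
      intro β hβ
      simp only [Finset.mem_Icc] at hβ
      rw [dig_tech_low hp ab.1 ab.2 β n hβ.1 hβ.2]
    rw [Finset.sum_congr rfl hterm, Finset.sum_product, ← ih]
    simp only [← Finset.sum_mul]
    rw [← Finset.mul_sum]

end sums

section orbit
variable {p : ℕ}

lemma orbit_sum (hp : 0 < p) (T : Finset ℕ) (F : ℕ → ℂ) (pos : ℕ → ℕ)
    (hposm : ∀ i ∈ T, 1 ≤ pos i)
    (hT : ∀ i ∈ T, ∀ v < p, updig p i (pos i) v ∈ T)
    (hpos : ∀ i ∈ T, ∀ v < p, pos (updig p i (pos i) v) = pos i)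
    (hzero : ∀ i ∈ T, ∑ v ∈ range p, F (updig p i (pos i) v) = 0) :
    ∑ i ∈ T, F i = 0 := by
  have key : (p : ℂ) * ∑ i ∈ T, F i = ∑ i ∈ T, ∑ v ∈ range p, F (updig p i (pos i) v) := by
    have lhs : (p : ℂ) * ∑ i ∈ T, F i = ∑ ab ∈ T ×ˢ range p, F ab.1 := by
      rw [Finset.sum_product]
      simp only [Finset.sum_const, Finset.card_range, nsmul_eq_mul]
      rw [Finset.mul_sum]
    have rhs : ∑ i ∈ T, ∑ v ∈ range p, F (updig p i (pos i) v)
        = ∑ ab ∈ T ×ˢ range p, F (updig p ab.1 (pos ab.1) ab.2) := by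
      rw [Finset.sum_product]
    rw [lhs, rhs]
    apply Finset.sum_nbij' (fun ab => (updig p ab.1 (pos ab.1) ab.2, dig p ab.1 (pos ab.1)))
      (fun ab => (updig p ab.1 (pos ab.1) ab.2, dig p ab.1 (pos ab.1)))
    · intro ab hab
      simp only [Finset.mem_product, Finset.mem_range] at hab ⊢
      exact ⟨hT ab.1 hab.1 ab.2 hab.2, dig_lt hp _ _⟩
    · intro ab hab
      simp only [Finset.mem_product, Finset.mem_range] at hab ⊢
      exact ⟨hT ab.1 hab.1 ab.2 hab.2, dig_lt hp _ _⟩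
    · intro ab hab
      simp only [Finset.mem_product, Finset.mem_range] at hab
      obtain ⟨h1, h2⟩ := hab
      have hL := hpos ab.1 h1 ab.2 h2
      have hm := hposm ab.1 h1
      rw [hL, updig_updig hp _ _ _ _ hm h2, updig_eq_self _ _ hm,
        dig_updig_self hp _ _ _ hm h2]
    · intro ab hab
      simp only [Finset.mem_product, Finset.mem_range] at hab
      obtain ⟨h1, h2⟩ := hab
      have hL := hpos ab.1 h1 ab.2 h2
      have hm := hposm ab.1 h1
      rw [hL, updig_updig hp _ _ _ _ hm h2, updig_eq_self _ _ hm,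
        dig_updig_self hp _ _ _ hm h2]
    · intro ab hab
      simp only [Finset.mem_product, Finset.mem_range] at hab
      obtain ⟨h1, h2⟩ := hab
      have hL := hpos ab.1 h1 ab.2 h2
      have hm := hposm ab.1 h1
      rw [hL, updig_updig hp _ _ _ _ hm h2, updig_eq_self _ _ hm]
  have h0 : ∑ i ∈ T, ∑ v ∈ range p, F (updig p i (pos i) v) = 0 :=
    Finset.sum_eq_zero hzero
  rw [h0] at key
  have hpc : (p : ℂ) ≠ 0 := by exact_mod_cast hp.ne'
  exact (mul_eq_zero.mp key).resolve_left hpc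

end orbit

section aseqlem

variable {p q m k : ℕ} {mcard : ℕ → ℕ} {pmap : ℕ → ℕ → ℕ} {lam : ℕ → ZMod q}

lemma pmap_inj
    (hmaps : ∀ β ∈ Finset.Icc 1 k, ∀ γ ∈ Finset.Icc 1 (mcard β), pmap β γ ∈ Finset.Icc 1 m)
    (hpart : ∀ l ∈ Finset.Icc 1 m, ∃! bg : ℕ × ℕ,
      bg.1 ∈ Finset.Icc 1 k ∧ bg.2 ∈ Finset.Icc 1 (mcard bg.1) ∧ pmap bg.1 bg.2 = l)
    {β1 γ1 β2 γ2 : ℕ} (h1 : β1 ∈ Finset.Icc 1 k) (h2 : γ1 ∈ Finset.Icc 1 (mcard β1))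
    (h3 : β2 ∈ Finset.Icc 1 k) (h4 : γ2 ∈ Finset.Icc 1 (mcard β2))
    (heq : pmap β1 γ1 = pmap β2 γ2) : β1 = β2 ∧ γ1 = γ2 := by
  obtain ⟨bg, _, huniq⟩ := hpart (pmap β1 γ1) (hmaps β1 h1 γ1 h2)
  have e1 := huniq (β1, γ1) ⟨h1, h2, rfl⟩
  have e2 := huniq (β2, γ2) ⟨h3, h4, heq.symm⟩
  have e3 : (β1, γ1) = (β2, γ2) := e1.trans e2.symm
  exact ⟨congrArg Prod.fst e3, congrArg Prod.snd e3⟩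

lemma aseq_form (hp : 0 < p) (t r : ℕ) :
    aseq p q m 0 k mcard pmap lam t 0 r
    = ((q / p : ℕ) : ZMod q) * (∑ β ∈ Finset.Icc 1 k, ∑ γ ∈ Finset.Icc 1 (mcard β - 1),
        (dig p r (pmap β γ) : ZMod q) * (dig p r (pmap β (γ + 1)) : ZMod q))
      + (∑ l ∈ Finset.Icc 1 m, lam l * (dig p r l : ZMod q) + lam 0)
      + ((q / p : ℕ) : ZMod q) * (∑ β ∈ Finset.Icc 1 k,
          (dig p t β : ZMod q) * (dig p r (pmap β (mcard β)) : ZMod q)) := by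
  rw [aseq]
  have h0 : Finset.Icc 1 0 = (∅ : Finset ℕ) := rfl
  have h1 : ∑ β ∈ Finset.Icc 1 k, dig p 0 β * dig p r (pmap β 1) = 0 :=
    Finset.sum_eq_zero (fun β _ => by rw [dig_zero hp, zero_mul])
  rw [h0, h1]
  push_cast
  ring

lemma aseq_sigma (hp : 0 < p) (t σ r : ℕ) :
    aseq p q m 0 k mcard pmap lam t σ r
    = aseq p q m 0 k mcard pmap lam t 0 r
      + ((q / p : ℕ) : ZMod q) * (∑ β ∈ Finset.Icc 1 k,
          (dig p σ β : ZMod q) * (dig p r (pmap β 1) : ZMod q)) := by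
  rw [aseq, aseq]
  have h0 : Finset.Icc 1 0 = (∅ : Finset ℕ) := rfl
  have h1 : ∑ β ∈ Finset.Icc 1 k, dig p 0 β * dig p r (pmap β 1) = 0 :=
    Finset.sum_eq_zero (fun β _ => by rw [dig_zero hp, zero_mul])
  rw [h0, h1]
  push_cast
  ring

lemma aseq_upd_diff (hp : 0 < p)
    (hmcard : ∀ β ∈ Finset.Icc 1 k, 1 ≤ mcard β)
    (hmaps : ∀ β ∈ Finset.Icc 1 k, ∀ γ ∈ Finset.Icc 1 (mcard β), pmap β γ ∈ Finset.Icc 1 m)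
    (hpart : ∀ l ∈ Finset.Icc 1 m, ∃! bg : ℕ × ℕ,
      bg.1 ∈ Finset.Icc 1 k ∧ bg.2 ∈ Finset.Icc 1 (mcard bg.1) ∧ pmap bg.1 bg.2 = l)
    {β0 γ0 : ℕ} (hβ0 : β0 ∈ Finset.Icc 1 k) (hγ0 : γ0 ∈ Finset.Icc 1 (mcard β0))
    (t r v : ℕ) (hv : v < p) :
    aseq p q m 0 k mcard pmap lam t 0 (updig p r (pmap β0 γ0) v)
    = aseq p q m 0 k mcard pmap lam t 0 r
      + ((q / p : ℕ) : ZMod q) * (((v : ZMod q) - (dig p r (pmap β0 γ0) : ZMod q)) *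
          ((if 2 ≤ γ0 then (dig p r (pmap β0 (γ0 - 1)) : ZMod q) else 0)
           + (if γ0 + 1 ≤ mcard β0 then (dig p r (pmap β0 (γ0 + 1)) : ZMod q) else 0)
           + (if γ0 = mcard β0 then (dig p t β0 : ZMod q) else 0)))
      + lam (pmap β0 γ0) * ((v : ZMod q) - (dig p r (pmap β0 γ0) : ZMod q)) := by
  classical
  set r' := updig p r (pmap β0 γ0) v with hr'def
  have hLm : pmap β0 γ0 ∈ Finset.Icc 1 m := hmaps β0 hβ0 γ0 hγ0
  have hL1 : 1 ≤ pmap β0 γ0 := (Finset.mem_Icc.mp hLm).1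
  have hβ0' := Finset.mem_Icc.mp hβ0
  have hγ0' := Finset.mem_Icc.mp hγ0
  have hdself : dig p r' (pmap β0 γ0) = v := dig_updig_self hp r (pmap β0 γ0) v hL1 hv
  have hdne : ∀ l', l' ≠ pmap β0 γ0 → 1 ≤ l' → dig p r' l' = dig p r l' :=
    fun l' h h1 => dig_updig_ne hp r (pmap β0 γ0) l' v hL1 h1 h hv
  have hpos_ne : ∀ β γ, β ∈ Finset.Icc 1 k → γ ∈ Finset.Icc 1 (mcard β) →
      (β ≠ β0 ∨ γ ≠ γ0) → pmap β γ ≠ pmap β0 γ0 := by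
    intro β γ hβ hγ hne heq
    obtain ⟨e1, e2⟩ := pmap_inj hmaps hpart hβ hγ hβ0 hγ0 heq
    tauto
  have hpmem : ∀ β γ, β ∈ Finset.Icc 1 k → γ ∈ Finset.Icc 1 (mcard β) → 1 ≤ pmap β γ :=
    fun β γ hβ hγ => (Finset.mem_Icc.mp (hmaps β hβ γ hγ)).1
  -- Quadratic part
  have hQ : (∑ β ∈ Finset.Icc 1 k, ∑ γ ∈ Finset.Icc 1 (mcard β - 1),
        (dig p r' (pmap β γ) : ZMod q) * (dig p r' (pmap β (γ + 1)) : ZMod q))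
      - (∑ β ∈ Finset.Icc 1 k, ∑ γ ∈ Finset.Icc 1 (mcard β - 1),
        (dig p r (pmap β γ) : ZMod q) * (dig p r (pmap β (γ + 1)) : ZMod q))
      = ((v : ZMod q) - (dig p r (pmap β0 γ0) : ZMod q)) *
          (if γ0 + 1 ≤ mcard β0 then (dig p r (pmap β0 (γ0 + 1)) : ZMod q) else 0)
        + (if 2 ≤ γ0 then (dig p r (pmap β0 (γ0 - 1)) : ZMod q) else 0) *
          ((v : ZMod q) - (dig p r (pmap β0 γ0) : ZMod q)) := by
    rw [← Finset.sum_sub_distrib]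
    have hterm : ∀ β ∈ Finset.Icc 1 k,
        ((∑ γ ∈ Finset.Icc 1 (mcard β - 1),
          (dig p r' (pmap β γ) : ZMod q) * (dig p r' (pmap β (γ + 1)) : ZMod q))
        - ∑ γ ∈ Finset.Icc 1 (mcard β - 1),
          (dig p r (pmap β γ) : ZMod q) * (dig p r (pmap β (γ + 1)) : ZMod q))
        = if β = β0 then
            (((v : ZMod q) - (dig p r (pmap β0 γ0) : ZMod q)) *
              (if γ0 + 1 ≤ mcard β0 then (dig p r (pmap β0 (γ0 + 1)) : ZMod q) else 0)
            + (if 2 ≤ γ0 then (dig p r (pmap β0 (γ0 - 1)) : ZMod q) else 0) *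
              ((v : ZMod q) - (dig p r (pmap β0 γ0) : ZMod q)))
          else 0 := by
      intro β hβ
      rw [← Finset.sum_sub_distrib]
      by_cases hββ : β = β0
      · subst hββ
        rw [if_pos rfl]
        have hsplit : ∀ γ ∈ Finset.Icc 1 (mcard β - 1),
            (dig p r' (pmap β γ) : ZMod q) * (dig p r' (pmap β (γ + 1)) : ZMod q)
            - (dig p r (pmap β γ) : ZMod q) * (dig p r (pmap β (γ + 1)) : ZMod q)
            = (if γ = γ0 then ((v : ZMod q) - (dig p r (pmap β γ0) : ZMod q)) *
                  (dig p r (pmap β (γ + 1)) : ZMod q) else 0)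
              + (if γ = γ0 - 1 then (dig p r (pmap β γ) : ZMod q) *
                  ((v : ZMod q) - (dig p r (pmap β γ0) : ZMod q)) else 0) := by
          intro γ hγ
          have hγ' := Finset.mem_Icc.mp hγ
          have hγv : γ ∈ Finset.Icc 1 (mcard β) := Finset.mem_Icc.mpr (by omega)
          have hγ1v : γ + 1 ∈ Finset.Icc 1 (mcard β) := Finset.mem_Icc.mpr (by omega)
          by_cases h1 : γ = γ0
          · rw [if_pos h1, if_neg (by omega)]
            have e1 : dig p r' (pmap β γ) = v := by rw [h1]; exact hdself
            have e2 : dig p r' (pmap β (γ + 1)) = dig p r (pmap β (γ + 1)) :=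
              hdne _ (hpos_ne β (γ + 1) hβ0 hγ1v (Or.inr (by omega))) (hpmem β (γ+1) hβ0 hγ1v)
            rw [e1, e2, h1]
            ring
          · by_cases h2 : γ = γ0 - 1
            · have hγ0ge : 2 ≤ γ0 := by omega
              have hadd : γ + 1 = γ0 := by omega
              rw [if_neg h1, if_pos h2]
              have e1 : dig p r' (pmap β γ) = dig p r (pmap β γ) :=
                hdne _ (hpos_ne β γ hβ0 hγv (Or.inr h1)) (hpmem β γ hβ0 hγv)
              have e2 : dig p r' (pmap β (γ + 1)) = v := by rw [hadd]; exact hdself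
              rw [e1, e2, hadd]
              ring
            · rw [if_neg h1, if_neg h2]
              have e1 : dig p r' (pmap β γ) = dig p r (pmap β γ) :=
                hdne _ (hpos_ne β γ hβ0 hγv (Or.inr h1)) (hpmem β γ hβ0 hγv)
              have e2 : dig p r' (pmap β (γ + 1)) = dig p r (pmap β (γ + 1)) :=
                hdne _ (hpos_ne β (γ + 1) hβ0 hγ1v (Or.inr (by omega))) (hpmem β (γ+1) hβ0 hγ1v)
              rw [e1, e2]
              ring
        rw [Finset.sum_congr rfl hsplit, Finset.sum_add_distrib,
          Finset.sum_ite_eq' (Finset.Icc 1 (mcard β - 1)) γ0,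
          Finset.sum_ite_eq' (Finset.Icc 1 (mcard β - 1)) (γ0 - 1)]
        have c1 : (γ0 ∈ Finset.Icc 1 (mcard β - 1)) ↔ (γ0 + 1 ≤ mcard β) := by
          rw [Finset.mem_Icc]; omega
        have c2 : (γ0 - 1 ∈ Finset.Icc 1 (mcard β - 1)) ↔ (2 ≤ γ0) := by
          rw [Finset.mem_Icc]; omega
        congr 1
        · rw [if_congr c1 rfl rfl]
          by_cases hc : γ0 + 1 ≤ mcard β
          · rw [if_pos hc, if_pos hc]
          · rw [if_neg hc, if_neg hc, mul_zero]
        · rw [if_congr c2 rfl rfl]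
          by_cases hc : 2 ≤ γ0
          · rw [if_pos hc, if_pos hc]
          · rw [if_neg hc, if_neg hc, zero_mul]
      · rw [if_neg hββ]
        apply Finset.sum_eq_zero
        intro γ hγ
        have hγ' := Finset.mem_Icc.mp hγ
        have hγv : γ ∈ Finset.Icc 1 (mcard β) := Finset.mem_Icc.mpr (by omega)
        have hγ1v : γ + 1 ∈ Finset.Icc 1 (mcard β) := Finset.mem_Icc.mpr (by omega)
        have e1 : dig p r' (pmap β γ) = dig p r (pmap β γ) :=
          hdne _ (hpos_ne β γ hβ hγv (Or.inl hββ)) (hpmem β γ hβ hγv)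
        have e2 : dig p r' (pmap β (γ + 1)) = dig p r (pmap β (γ + 1)) :=
          hdne _ (hpos_ne β (γ + 1) hβ hγ1v (Or.inl hββ)) (hpmem β (γ+1) hβ hγ1v)
        rw [e1, e2, sub_self]
    rw [Finset.sum_congr rfl hterm, Finset.sum_ite_eq' (Finset.Icc 1 k) β0, if_pos hβ0]
  -- Linear part
  have hLp : (∑ l ∈ Finset.Icc 1 m, lam l * (dig p r' l : ZMod q))
      - (∑ l ∈ Finset.Icc 1 m, lam l * (dig p r l : ZMod q))
      = lam (pmap β0 γ0) * ((v : ZMod q) - (dig p r (pmap β0 γ0) : ZMod q)) := by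
    rw [← Finset.sum_sub_distrib]
    have hterm : ∀ l ∈ Finset.Icc 1 m,
        lam l * (dig p r' l : ZMod q) - lam l * (dig p r l : ZMod q)
        = if l = pmap β0 γ0 then lam l * ((v : ZMod q) - (dig p r l : ZMod q)) else 0 := by
      intro l hl
      have hl1 : 1 ≤ l := (Finset.mem_Icc.mp hl).1
      by_cases h : l = pmap β0 γ0
      · rw [if_pos h]
        have e1 : dig p r' l = v := by rw [h]; exact hdself
        rw [e1]; ring
      · rw [if_neg h, hdne l h hl1, sub_self]
    rw [Finset.sum_congr rfl hterm, Finset.sum_ite_eq' (Finset.Icc 1 m) (pmap β0 γ0),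
      if_pos hLm]
  -- t part
  have hT : (∑ β ∈ Finset.Icc 1 k, (dig p t β : ZMod q) * (dig p r' (pmap β (mcard β)) : ZMod q))
      - (∑ β ∈ Finset.Icc 1 k, (dig p t β : ZMod q) * (dig p r (pmap β (mcard β)) : ZMod q))
      = (if γ0 = mcard β0 then (dig p t β0 : ZMod q) else 0) *
          ((v : ZMod q) - (dig p r (pmap β0 γ0) : ZMod q)) := by
    rw [← Finset.sum_sub_distrib]
    have hterm : ∀ β ∈ Finset.Icc 1 k,
        (dig p t β : ZMod q) * (dig p r' (pmap β (mcard β)) : ZMod q)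
        - (dig p t β : ZMod q) * (dig p r (pmap β (mcard β)) : ZMod q)
        = if β = β0 then (if γ0 = mcard β0 then (dig p t β0 : ZMod q) else 0) *
            ((v : ZMod q) - (dig p r (pmap β0 γ0) : ZMod q)) else 0 := by
      intro β hβ
      have hmem : mcard β ∈ Finset.Icc 1 (mcard β) :=
        Finset.mem_Icc.mpr ⟨hmcard β hβ, le_refl _⟩
      by_cases hββ : β = β0
      · subst hββ
        rw [if_pos rfl]
        by_cases hc : γ0 = mcard β
        · rw [if_pos hc]
          have e1 : dig p r' (pmap β (mcard β)) = v := by rw [← hc]; exact hdself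
          have e2 : pmap β (mcard β) = pmap β γ0 := by rw [← hc]
          rw [e1, ← hc]
          ring
        · rw [if_neg hc, zero_mul]
          have e1 : dig p r' (pmap β (mcard β)) = dig p r (pmap β (mcard β)) :=
            hdne _ (hpos_ne β (mcard β) hβ hmem (Or.inr (fun h => hc h.symm)))
              (hpmem β (mcard β) hβ hmem)
          rw [e1, sub_self]
      · rw [if_neg hββ]
        have e1 : dig p r' (pmap β (mcard β)) = dig p r (pmap β (mcard β)) :=
          hdne _ (hpos_ne β (mcard β) hβ hmem (Or.inl hββ)) (hpmem β (mcard β) hβ hmem)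
        rw [e1, sub_self]
    rw [Finset.sum_congr rfl hterm, Finset.sum_ite_eq' (Finset.Icc 1 k) β0, if_pos hβ0]
  rw [aseq_form hp t r', aseq_form hp t r]
  linear_combination (((q / p : ℕ) : ZMod q)) * hQ + hLp + (((q / p : ℕ) : ZMod q)) * hT

end aseqlem

/-- Choice of a chain position for the orbit pairing. -/
def posFun (m k : ℕ) (mcard : ℕ → ℕ) (pmap : ℕ → ℕ → ℕ) (D : ℕ → Prop) [DecidablePred D] : ℕ :=
  let l0 := WithTop.untopD 0 (((Finset.Icc 1 m).filter D).min)
  let β := WithTop.untopD 0 ((((Finset.Icc 1 k)).filter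
      (fun b => l0 ∈ (Finset.Icc 1 (mcard b)).image (pmap b))).min)
  pmap β (WithTop.untopD 0 (((Finset.Icc 1 (mcard β)).filter (fun g => D (pmap β g))).min) - 1)

lemma min_unbot_mem {s : Finset ℕ} (h : s.Nonempty) : WithTop.untopD 0 (s.min) ∈ s := by
  rw [← Finset.coe_min' h, WithTop.untopD_coe]
  exact Finset.min'_mem _ h

lemma min_unbot_le {s : Finset ℕ} (h : s.Nonempty) {x : ℕ} (hx : x ∈ s) :
    WithTop.untopD 0 (s.min) ≤ x := by
  rw [← Finset.coe_min' h, WithTop.untopD_coe]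
  exact Finset.min'_le _ _ hx

section posfun
variable {p q m k : ℕ} {mcard : ℕ → ℕ} {pmap : ℕ → ℕ → ℕ}

lemma posFun_congr
    (hmaps : ∀ β ∈ Finset.Icc 1 k, ∀ γ ∈ Finset.Icc 1 (mcard β), pmap β γ ∈ Finset.Icc 1 m)
    {D1 D2 : ℕ → Prop} [DecidablePred D1] [DecidablePred D2]
    (hex : ∃ l ∈ Finset.Icc 1 m, D1 l)
    (hpart : ∀ l ∈ Finset.Icc 1 m, ∃! bg : ℕ × ℕ,
      bg.1 ∈ Finset.Icc 1 k ∧ bg.2 ∈ Finset.Icc 1 (mcard bg.1) ∧ pmap bg.1 bg.2 = l)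
    (h : ∀ l ∈ Finset.Icc 1 m, (D1 l ↔ D2 l)) :
    posFun m k mcard pmap D1 = posFun m k mcard pmap D2 := by
  have hfil : (Finset.Icc 1 m).filter D1 = (Finset.Icc 1 m).filter D2 :=
    Finset.filter_congr (fun x hx => h x hx)
  rw [posFun, posFun]
  simp only [hfil]
  set l0 := WithTop.untopD 0 ((((Finset.Icc 1 m).filter D2)).min) with hl0
  -- the chain index is the same on both sides
  set β := WithTop.untopD 0 ((((Finset.Icc 1 k)).filter
      (fun b => l0 ∈ (Finset.Icc 1 (mcard b)).image (pmap b))).min) with hβ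
  -- β is a legitimate chain when D1 holds somewhere
  have hS : (((Finset.Icc 1 m).filter D2)).Nonempty := by
    obtain ⟨l, hl, hDl⟩ := hex
    exact ⟨l, Finset.mem_filter.mpr ⟨hl, (h l hl).mp hDl⟩⟩
  have hl0mem : l0 ∈ (Finset.Icc 1 m).filter D2 := min_unbot_mem hS
  have hl0m : l0 ∈ Finset.Icc 1 m := Finset.mem_of_mem_filter _ hl0mem
  obtain ⟨⟨b, g⟩, ⟨hbk, hgm, hbg⟩, _⟩ := hpart l0 hl0m
  have hB : (((Finset.Icc 1 k)).filter
      (fun b => l0 ∈ (Finset.Icc 1 (mcard b)).image (pmap b))).Nonempty :=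
    ⟨b, Finset.mem_filter.mpr ⟨hbk, Finset.mem_image.mpr ⟨g, hgm, hbg⟩⟩⟩
  have hβk : β ∈ Finset.Icc 1 k := Finset.mem_of_mem_filter _ (min_unbot_mem hB)
  have hfil2 : (Finset.Icc 1 (mcard β)).filter (fun g => D1 (pmap β g))
      = (Finset.Icc 1 (mcard β)).filter (fun g => D2 (pmap β g)) :=
    Finset.filter_congr (fun g hg => h _ (hmaps β hβk g hg))
  rw [hfil2]

lemma posFun_spec
    (hmaps : ∀ β ∈ Finset.Icc 1 k, ∀ γ ∈ Finset.Icc 1 (mcard β), pmap β γ ∈ Finset.Icc 1 m)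
    (hpart : ∀ l ∈ Finset.Icc 1 m, ∃! bg : ℕ × ℕ,
      bg.1 ∈ Finset.Icc 1 k ∧ bg.2 ∈ Finset.Icc 1 (mcard bg.1) ∧ pmap bg.1 bg.2 = l)
    {D : ℕ → Prop} [DecidablePred D]
    (hex : ∃ l ∈ Finset.Icc 1 m, D l)
    (hone : ∀ β ∈ Finset.Icc 1 k, ¬ D (pmap β 1)) :
    ∃ β γ', β ∈ Finset.Icc 1 k ∧ γ' ∈ Finset.Icc 1 (mcard β) ∧ 2 ≤ γ' ∧ D (pmap β γ')
      ∧ (∀ γ'' ∈ Finset.Icc 1 (mcard β), γ'' < γ' → ¬ D (pmap β γ''))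
      ∧ posFun m k mcard pmap D = pmap β (γ' - 1) := by
  have hS : ((Finset.Icc 1 m).filter D).Nonempty := by
    obtain ⟨l, hl, hDl⟩ := hex
    exact ⟨l, Finset.mem_filter.mpr ⟨hl, hDl⟩⟩
  set l0 := WithTop.untopD 0 ((((Finset.Icc 1 m).filter D)).min) with hl0
  have hl0mem : l0 ∈ (Finset.Icc 1 m).filter D := min_unbot_mem hS
  have hl0m : l0 ∈ Finset.Icc 1 m := Finset.mem_of_mem_filter _ hl0mem
  have hDl0 : D l0 := (Finset.mem_filter.mp hl0mem).2
  obtain ⟨⟨b, g⟩, ⟨hbk, hgm, hbg⟩, _⟩ := hpart l0 hl0m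
  have hB : (((Finset.Icc 1 k)).filter
      (fun b => l0 ∈ (Finset.Icc 1 (mcard b)).image (pmap b))).Nonempty :=
    ⟨b, Finset.mem_filter.mpr ⟨hbk, Finset.mem_image.mpr ⟨g, hgm, hbg⟩⟩⟩
  set β := WithTop.untopD 0 ((((Finset.Icc 1 k)).filter
      (fun b => l0 ∈ (Finset.Icc 1 (mcard b)).image (pmap b))).min) with hβ
  have hβmem := min_unbot_mem hB
  have hβk : β ∈ Finset.Icc 1 k := Finset.mem_of_mem_filter _ hβmem
  obtain ⟨g0, hg0m, hg0⟩ := Finset.mem_image.mp (Finset.mem_filter.mp hβmem).2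
  have hC : ((Finset.Icc 1 (mcard β)).filter (fun g => D (pmap β g))).Nonempty :=
    ⟨g0, Finset.mem_filter.mpr ⟨hg0m, by rw [hg0]; exact hDl0⟩⟩
  set γ' := (WithTop.untopD 0 (((Finset.Icc 1 (mcard β)).filter (fun g => D (pmap β g))).min)) with hγ'
  have hγ'mem : γ' ∈ (Finset.Icc 1 (mcard β)).filter (fun g => D (pmap β g)) :=
    min_unbot_mem hC
  have hγ'm : γ' ∈ Finset.Icc 1 (mcard β) := Finset.mem_of_mem_filter _ hγ'mem
  have hDγ' : D (pmap β γ') := (Finset.mem_filter.mp hγ'mem).2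
  have hmin : ∀ γ'' ∈ Finset.Icc 1 (mcard β), γ'' < γ' → ¬ D (pmap β γ'') := by
    intro γ'' hγ'' hlt hD
    have : γ' ≤ γ'' := min_unbot_le hC (Finset.mem_filter.mpr ⟨hγ'', hD⟩)
    omega
  have h2 : 2 ≤ γ' := by
    have h1' : 1 ≤ γ' := (Finset.mem_Icc.mp hγ'm).1
    rcases Nat.lt_or_ge γ' 2 with hlt | hge
    · have he : γ' = 1 := by omega
      rw [he] at hDγ'
      exact absurd hDγ' (hone β hβk)
    · exact hge
  exact ⟨β, γ', hβk, hγ'm, h2, hDγ', hmin, rfl⟩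

end posfun

section mainlem
variable {p q m k : ℕ} {mcard : ℕ → ℕ} {pmap : ℕ → ℕ → ℕ} {lam : ℕ → ZMod q}

lemma eomega_sum (hq : 0 < q) {α : Type*} (s : Finset α) (f : α → ZMod q) :
    eomega q (∑ x ∈ s, f x) = ∏ x ∈ s, eomega q (f x) := by
  classical
  induction s using Finset.cons_induction with
  | empty => simp [eomega_zero]
  | cons a s ha ih => rw [Finset.sum_cons, Finset.prod_cons, eomega_add hq, ih]

lemma collapse_sigma (hp : 0 < p) (hq : 0 < q) (hpq : p ∣ q)
    (t1 t2 i j : ℕ) :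
    ∑ σ ∈ Finset.range (p ^ k),
      eomega q (aseq p q m 0 k mcard pmap lam t1 σ i - aseq p q m 0 k mcard pmap lam t2 σ j)
    = if (∀ β ∈ Finset.Icc 1 k, dig p i (pmap β 1) = dig p j (pmap β 1))
      then (p : ℂ) ^ k * eomega q (aseq p q m 0 k mcard pmap lam t1 0 i
        - aseq p q m 0 k mcard pmap lam t2 0 j)
      else 0 := by
  classical
  have key : ∀ σ : ℕ,
      eomega q (aseq p q m 0 k mcard pmap lam t1 σ i - aseq p q m 0 k mcard pmap lam t2 σ j)
      = eomega q (aseq p q m 0 k mcard pmap lam t1 0 i - aseq p q m 0 k mcard pmap lam t2 0 j)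
        * ∏ β ∈ Finset.Icc 1 k,
          (eomega q (((q / p : ℕ) : ZMod q) *
            ((dig p i (pmap β 1) : ZMod q) - (dig p j (pmap β 1) : ZMod q)))) ^ (dig p σ β) := by
    intro σ
    rw [aseq_sigma hp t1 σ i, aseq_sigma hp t2 σ j]
    have e1 : (aseq p q m 0 k mcard pmap lam t1 0 i
          + ((q / p : ℕ) : ZMod q) * (∑ β ∈ Finset.Icc 1 k,
            (dig p σ β : ZMod q) * (dig p i (pmap β 1) : ZMod q)))
        - (aseq p q m 0 k mcard pmap lam t2 0 j
          + ((q / p : ℕ) : ZMod q) * (∑ β ∈ Finset.Icc 1 k,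
            (dig p σ β : ZMod q) * (dig p j (pmap β 1) : ZMod q)))
        = (aseq p q m 0 k mcard pmap lam t1 0 i - aseq p q m 0 k mcard pmap lam t2 0 j)
          + ∑ β ∈ Finset.Icc 1 k, (dig p σ β) •
            (((q / p : ℕ) : ZMod q) *
              ((dig p i (pmap β 1) : ZMod q) - (dig p j (pmap β 1) : ZMod q))) := by
      have h2 : ∀ β ∈ Finset.Icc 1 k, (dig p σ β) •
            (((q / p : ℕ) : ZMod q) *
              ((dig p i (pmap β 1) : ZMod q) - (dig p j (pmap β 1) : ZMod q)))
          = ((q / p : ℕ) : ZMod q) * ((dig p σ β : ZMod q) * (dig p i (pmap β 1) : ZMod q))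
            - ((q / p : ℕ) : ZMod q) * ((dig p σ β : ZMod q) * (dig p j (pmap β 1) : ZMod q)) :=
        fun β _ => by rw [nsmul_eq_mul]; ring
      rw [Finset.sum_congr rfl h2, Finset.sum_sub_distrib, ← Finset.mul_sum, ← Finset.mul_sum]
      ring
    rw [e1, eomega_add hq, eomega_sum hq]
    congr 1
    exact Finset.prod_congr rfl (fun β _ => eomega_nsmul hq _ _)
  rw [Finset.sum_congr rfl (fun σ _ => key σ), ← Finset.mul_sum,
    sum_digits_prod hp k]
  have hfact : ∀ β ∈ Finset.Icc 1 k,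
      (∑ v ∈ Finset.range p, (eomega q (((q / p : ℕ) : ZMod q) *
        ((dig p i (pmap β 1) : ZMod q) - (dig p j (pmap β 1) : ZMod q)))) ^ v)
      = if dig p i (pmap β 1) = dig p j (pmap β 1) then (p : ℂ) else 0 :=
    fun β _ => sum_w hp hq hpq _ _ (dig_lt hp i _) (dig_lt hp j _)
  rw [Finset.prod_congr rfl hfact]
  by_cases hcond : ∀ β ∈ Finset.Icc 1 k, dig p i (pmap β 1) = dig p j (pmap β 1)
  · rw [if_pos hcond]
    have hpp : ∀ β ∈ Finset.Icc 1 k,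
        (if dig p i (pmap β 1) = dig p j (pmap β 1) then (p : ℂ) else 0) = (p : ℂ) :=
      fun β hβ => if_pos (hcond β hβ)
    rw [Finset.prod_congr rfl hpp, Finset.prod_const, Nat.card_Icc]
    simp only [Nat.add_sub_cancel]
    ring
  · rw [if_neg hcond]
    push_neg at hcond
    obtain ⟨β0, hβ0, hne⟩ := hcond
    have hz : (if dig p i (pmap β0 1) = dig p j (pmap β0 1) then (p : ℂ) else 0) = 0 :=
      if_neg hne
    rw [Finset.prod_eq_zero hβ0 hz, mul_zero]

lemma main_sum (hpp : p.Prime) (hq : 0 < q) (hpq : p ∣ q)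
    (hmcard : ∀ β ∈ Finset.Icc 1 k, 1 ≤ mcard β)
    (hmaps : ∀ β ∈ Finset.Icc 1 k, ∀ γ ∈ Finset.Icc 1 (mcard β), pmap β γ ∈ Finset.Icc 1 m)
    (hpart : ∀ l ∈ Finset.Icc 1 m, ∃! bg : ℕ × ℕ,
      bg.1 ∈ Finset.Icc 1 k ∧ bg.2 ∈ Finset.Icc 1 (mcard bg.1) ∧ pmap bg.1 bg.2 = l)
    (t1 t2 s : ℕ) (ht1 : t1 < p ^ k) (ht2 : t2 < p ^ k) (hst : s ≠ 0 ∨ t1 ≠ t2) :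
    ∑ σ ∈ Finset.range (p ^ k), ∑ i ∈ Finset.range (p ^ m - s),
      eomega q (aseq p q m 0 k mcard pmap lam t1 σ i
        - aseq p q m 0 k mcard pmap lam t2 σ (i + s)) = 0 := by
  have hp : 0 < p := hpp.pos
  rw [Finset.sum_comm]
  rw [Finset.sum_congr rfl (fun i _ => collapse_sigma hp hq hpq t1 t2 i (i + s))]
  rw [← Finset.sum_filter]
  rcases Nat.eq_zero_or_pos s with hs0 | hspos
  · -- s = 0 case : t1 ≠ t2
    subst hs0
    have hne : t1 ≠ t2 := hst.resolve_left (by simp)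
    have hbt : ∃ β ∈ Finset.Icc 1 k, dig p t1 β ≠ dig p t2 β := by
      by_contra hb
      push_neg at hb
      exact hne (eq_of_dig_eq hp k t1 t2 ht1 ht2 hb)
    obtain ⟨βt, hβtk, hβtne⟩ := hbt
    have hmem : mcard βt ∈ Finset.Icc 1 (mcard βt) :=
      Finset.mem_Icc.mpr ⟨hmcard βt hβtk, le_refl _⟩
    have hLm : pmap βt (mcard βt) ∈ Finset.Icc 1 m := hmaps βt hβtk (mcard βt) hmem
    have hL1 : 1 ≤ pmap βt (mcard βt) := (Finset.mem_Icc.mp hLm).1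
    have hLmm : pmap βt (mcard βt) ≤ m := (Finset.mem_Icc.mp hLm).2
    apply orbit_sum hp _ _ (fun _ => pmap βt (mcard βt))
    · intro i _; exact hL1
    · intro i hi v hv
      rw [Finset.mem_filter] at hi ⊢
      obtain ⟨hir, _⟩ := hi
      rw [Finset.mem_range] at hir
      refine ⟨Finset.mem_range.mpr ?_, fun β hβ => by rw [Nat.add_zero]⟩
      have := updig_lt hp (show i < p ^ m by omega) hL1 hLmm hv
      omega
    · intro i _ v _; rfl
    · intro i hi
      rw [Finset.mem_filter, Finset.mem_range] at hi
      obtain ⟨hir, _⟩ := hi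
      have hG : ∀ v < p,
          (aseq p q m 0 k mcard pmap lam t1 0 (updig p i (pmap βt (mcard βt)) v)
          - aseq p q m 0 k mcard pmap lam t2 0 (updig p i (pmap βt (mcard βt)) v + 0))
          = (aseq p q m 0 k mcard pmap lam t1 0 i - aseq p q m 0 k mcard pmap lam t2 0 (i + 0))
            + ((q / p : ℕ) : ZMod q) * (((v : ZMod q) - (dig p i (pmap βt (mcard βt)) : ZMod q))
              * ((dig p t1 βt : ZMod q) - (dig p t2 βt : ZMod q))) := by
        intro v hv
        rw [Nat.add_zero, Nat.add_zero]
        rw [aseq_upd_diff hp hmcard hmaps hpart hβtk hmem t1 i v hv,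
          aseq_upd_diff hp hmcard hmaps hpart hβtk hmem t2 i v hv]
        simp only [eq_self_iff_true, if_true]
        ring
      have h0 : ∑ v ∈ Finset.range p,
          ((p : ℂ) ^ k * eomega q
            (aseq p q m 0 k mcard pmap lam t1 0 (updig p i (pmap βt (mcard βt)) v)
            - aseq p q m 0 k mcard pmap lam t2 0 (updig p i (pmap βt (mcard βt)) v + 0)))
          = (p : ℂ) ^ k * 0 := by
        rw [← Finset.mul_sum]
        congr 1
        exact sum_orbit_zero hp hq hpq
          (aseq p q m 0 k mcard pmap lam t1 0 i - aseq p q m 0 k mcard pmap lam t2 0 (i + 0))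
          (dig p t1 βt) (dig p t2 βt) (dig p i (pmap βt (mcard βt)))
          (dig_lt hp t1 βt) (dig_lt hp t2 βt) hβtne _ hG
      rw [mul_zero] at h0
      exact h0
  · -- s ≠ 0 case
    have common : ∀ i, i < p ^ m - s →
        (∀ β ∈ Finset.Icc 1 k, dig p i (pmap β 1) = dig p (i + s) (pmap β 1)) →
        ∃ β γ', β ∈ Finset.Icc 1 k ∧ γ' ∈ Finset.Icc 1 (mcard β) ∧ 2 ≤ γ'
          ∧ dig p i (pmap β γ') ≠ dig p (i + s) (pmap β γ')
          ∧ (∀ γ'' ∈ Finset.Icc 1 (mcard β), γ'' < γ' →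
              dig p i (pmap β γ'') = dig p (i + s) (pmap β γ''))
          ∧ posFun m k mcard pmap (fun l => ¬ (dig p i l = dig p (i + s) l))
              = pmap β (γ' - 1) := by
      intro i hir hcond
      have him : i < p ^ m := by omega
      have hjm : i + s < p ^ m := by omega
      have hDex : ∃ l ∈ Finset.Icc 1 m, ¬ (dig p i l = dig p (i + s) l) := by
        by_contra hb
        push_neg at hb
        have : i = i + s := eq_of_dig_eq hp m i (i + s) him hjm (fun l hl => hb l hl)
        omega
      have hone : ∀ β ∈ Finset.Icc 1 k, ¬ ¬ (dig p i (pmap β 1) = dig p (i + s) (pmap β 1)) :=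
        fun β hβ => not_not.mpr (hcond β hβ)
      obtain ⟨β, γ', hβk, hγ'm, h2γ, hDγ', hmin, hposeq⟩ :=
        posFun_spec (D := fun l => ¬ (dig p i l = dig p (i + s) l)) hmaps hpart hDex hone
      exact ⟨β, γ', hβk, hγ'm, h2γ, hDγ',
        fun γ'' h1 h2 => not_not.mp (hmin γ'' h1 h2), hposeq⟩
    apply orbit_sum hp _ _
      (fun i => posFun m k mcard pmap (fun l => ¬ (dig p i l = dig p (i + s) l)))
    · -- positivity of the position
      intro i hi
      rw [Finset.mem_filter, Finset.mem_range] at hi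
      obtain ⟨β, γ', hβk, hγ'm, h2γ, hDγ', hminEq, hposeq⟩ := common i hi.1 hi.2
      have hγ'' := Finset.mem_Icc.mp hγ'm
      have hγ'1m : γ' - 1 ∈ Finset.Icc 1 (mcard β) := Finset.mem_Icc.mpr (by omega)
      rw [hposeq]
      exact (Finset.mem_Icc.mp (hmaps β hβk (γ' - 1) hγ'1m)).1
    · -- closure of T under the orbit
      intro i hi v hv
      rw [Finset.mem_filter, Finset.mem_range] at hi
      obtain ⟨β, γ', hβk, hγ'm, h2γ, hDγ', hminEq, hposeq⟩ := common i hi.1 hi.2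
      have hγ'' := Finset.mem_Icc.mp hγ'm
      have hγ'1m : γ' - 1 ∈ Finset.Icc 1 (mcard β) := Finset.mem_Icc.mpr (by omega)
      have hLm : pmap β (γ' - 1) ∈ Finset.Icc 1 m := hmaps β hβk (γ' - 1) hγ'1m
      have hL1 : 1 ≤ pmap β (γ' - 1) := (Finset.mem_Icc.mp hLm).1
      have hLmm : pmap β (γ' - 1) ≤ m := (Finset.mem_Icc.mp hLm).2
      obtain ⟨hir, hcond⟩ := hi
      have him : i < p ^ m := by omega
      have hjm : i + s < p ^ m := by omega
      have hagree : dig p i (pmap β (γ' - 1)) = dig p (i + s) (pmap β (γ' - 1)) :=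
        hminEq (γ' - 1) hγ'1m (by omega)
      have hupd_add : updig p i (pmap β (γ' - 1)) v + s
          = updig p (i + s) (pmap β (γ' - 1)) v := by
        have h1 := updig_add_dig (p := p) i (pmap β (γ' - 1)) v hL1
        have h2 := updig_add_dig (p := p) (i + s) (pmap β (γ' - 1)) v hL1
        rw [← hagree] at h2
        omega
      rw [hposeq, Finset.mem_filter, Finset.mem_range]
      constructor
      · have hu1 : updig p i (pmap β (γ' - 1)) v < p ^ m := updig_lt hp him hL1 hLmm hv
        have hu2 : updig p (i + s) (pmap β (γ' - 1)) v < p ^ m := updig_lt hp hjm hL1 hLmm hv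
        omega
      · intro β'' hβ''
        have hp1m : pmap β'' 1 ∈ Finset.Icc 1 m :=
          hmaps β'' hβ'' 1 (Finset.mem_Icc.mpr ⟨le_refl _, hmcard β'' hβ''⟩)
        have hp1 : 1 ≤ pmap β'' 1 := (Finset.mem_Icc.mp hp1m).1
        rw [hupd_add]
        by_cases hPL : pmap β'' 1 = pmap β (γ' - 1)
        · rw [hPL, dig_updig_self hp i _ v hL1 hv, dig_updig_self hp (i + s) _ v hL1 hv]
        · rw [dig_updig_ne hp i _ _ v hL1 hp1 hPL hv,
            dig_updig_ne hp (i + s) _ _ v hL1 hp1 hPL hv]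
          exact hcond β'' hβ''
    · -- invariance of the position choice
      intro i hi v hv
      rw [Finset.mem_filter, Finset.mem_range] at hi
      obtain ⟨β, γ', hβk, hγ'm, h2γ, hDγ', hminEq, hposeq⟩ := common i hi.1 hi.2
      have hγ'' := Finset.mem_Icc.mp hγ'm
      have hγ'1m : γ' - 1 ∈ Finset.Icc 1 (mcard β) := Finset.mem_Icc.mpr (by omega)
      have hLm : pmap β (γ' - 1) ∈ Finset.Icc 1 m := hmaps β hβk (γ' - 1) hγ'1m
      have hL1 : 1 ≤ pmap β (γ' - 1) := (Finset.mem_Icc.mp hLm).1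
      have hLmm : pmap β (γ' - 1) ≤ m := (Finset.mem_Icc.mp hLm).2
      obtain ⟨hir, hcond⟩ := hi
      have hagree : dig p i (pmap β (γ' - 1)) = dig p (i + s) (pmap β (γ' - 1)) :=
        hminEq (γ' - 1) hγ'1m (by omega)
      have hupd_add : updig p i (pmap β (γ' - 1)) v + s
          = updig p (i + s) (pmap β (γ' - 1)) v := by
        have h1 := updig_add_dig (p := p) i (pmap β (γ' - 1)) v hL1
        have h2 := updig_add_dig (p := p) (i + s) (pmap β (γ' - 1)) v hL1
        rw [← hagree] at h2
        omega
      have hneL : pmap β γ' ≠ pmap β (γ' - 1) := by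
        intro h
        have := (pmap_inj hmaps hpart hβk hγ'm hβk hγ'1m h).2
        omega
      have hγ'pm : pmap β γ' ∈ Finset.Icc 1 m := hmaps β hβk γ' hγ'm
      have hγ'p1 : 1 ≤ pmap β γ' := (Finset.mem_Icc.mp hγ'pm).1
      rw [hposeq]
      have hex' : ∃ l ∈ Finset.Icc 1 m,
          ¬ (dig p (updig p i (pmap β (γ' - 1)) v) l
            = dig p (updig p i (pmap β (γ' - 1)) v + s) l) := by
        refine ⟨pmap β γ', hγ'pm, ?_⟩
        rw [hupd_add, dig_updig_ne hp i _ _ v hL1 hγ'p1 hneL hv,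
          dig_updig_ne hp (i + s) _ _ v hL1 hγ'p1 hneL hv]
        exact hDγ'
      have hiff : ∀ l ∈ Finset.Icc 1 m,
          ((¬ (dig p (updig p i (pmap β (γ' - 1)) v) l
            = dig p (updig p i (pmap β (γ' - 1)) v + s) l))
          ↔ (¬ (dig p i l = dig p (i + s) l))) := by
        intro l hl
        have hl1 : 1 ≤ l := (Finset.mem_Icc.mp hl).1
        rw [hupd_add]
        by_cases hlL : l = pmap β (γ' - 1)
        · subst hlL
          rw [dig_updig_self hp i _ v hL1 hv, dig_updig_self hp (i + s) _ v hL1 hv]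
          simp [hagree]
        · rw [dig_updig_ne hp i _ _ v hL1 hl1 hlL hv,
            dig_updig_ne hp (i + s) _ _ v hL1 hl1 hlL hv]
      exact (posFun_congr hmaps hex' hpart hiff).trans hposeq
    · -- the orbit sums vanish
      intro i hi
      rw [Finset.mem_filter, Finset.mem_range] at hi
      obtain ⟨β, γ', hβk, hγ'm, h2γ, hDγ', hminEq, hposeq⟩ := common i hi.1 hi.2
      have hγ'' := Finset.mem_Icc.mp hγ'm
      have hγ'1m : γ' - 1 ∈ Finset.Icc 1 (mcard β) := Finset.mem_Icc.mpr (by omega)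
      have hLm : pmap β (γ' - 1) ∈ Finset.Icc 1 m := hmaps β hβk (γ' - 1) hγ'1m
      have hL1 : 1 ≤ pmap β (γ' - 1) := (Finset.mem_Icc.mp hLm).1
      obtain ⟨hir, hcond⟩ := hi
      have hagree : dig p i (pmap β (γ' - 1)) = dig p (i + s) (pmap β (γ' - 1)) :=
        hminEq (γ' - 1) hγ'1m (by omega)
      have hupd_add : ∀ v : ℕ, updig p i (pmap β (γ' - 1)) v + s
          = updig p (i + s) (pmap β (γ' - 1)) v := by
        intro v
        have h1 := updig_add_dig (p := p) i (pmap β (γ' - 1)) v hL1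
        have h2 := updig_add_dig (p := p) (i + s) (pmap β (γ' - 1)) v hL1
        rw [← hagree] at h2
        omega
      rw [hposeq]
      have hG : ∀ v < p,
          (aseq p q m 0 k mcard pmap lam t1 0 (updig p i (pmap β (γ' - 1)) v)
          - aseq p q m 0 k mcard pmap lam t2 0 (updig p i (pmap β (γ' - 1)) v + s))
          = (aseq p q m 0 k mcard pmap lam t1 0 i - aseq p q m 0 k mcard pmap lam t2 0 (i + s))
            + ((q / p : ℕ) : ZMod q) * (((v : ZMod q) - (dig p i (pmap β (γ' - 1)) : ZMod q))
              * ((dig p i (pmap β γ') : ZMod q) - (dig p (i + s) (pmap β γ') : ZMod q))) := by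
        intro v hv
        rw [hupd_add v]
        rw [aseq_upd_diff hp hmcard hmaps hpart hβk hγ'1m t1 i v hv,
          aseq_upd_diff hp hmcard hmaps hpart hβk hγ'1m t2 (i + s) v hv]
        have hIfT : ¬ (γ' - 1 = mcard β) := by omega
        have hIfR : γ' - 1 + 1 ≤ mcard β := by omega
        have hidx : γ' - 1 + 1 = γ' := by omega
        rw [if_neg hIfT, if_neg hIfT, if_pos hIfR, if_pos hIfR, hidx]
        have hIfL : (if 2 ≤ γ' - 1 then ((dig p (i + s) (pmap β (γ' - 1 - 1)) : ZMod q)) else 0)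
            = (if 2 ≤ γ' - 1 then ((dig p i (pmap β (γ' - 1 - 1)) : ZMod q)) else 0) := by
          by_cases hc : 2 ≤ γ' - 1
          · rw [if_pos hc, if_pos hc]
            have := hminEq (γ' - 1 - 1) (Finset.mem_Icc.mpr (by omega)) (by omega)
            rw [this]
          · rw [if_neg hc, if_neg hc]
        rw [hIfL, ← hagree]
        ring
      have h0 : ∑ v ∈ Finset.range p,
          ((p : ℂ) ^ k * eomega q
            (aseq p q m 0 k mcard pmap lam t1 0 (updig p i (pmap β (γ' - 1)) v)
            - aseq p q m 0 k mcard pmap lam t2 0 (updig p i (pmap β (γ' - 1)) v + s)))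
          = (p : ℂ) ^ k * 0 := by
        rw [← Finset.mul_sum]
        congr 1
        exact sum_orbit_zero hp hq hpq
          (aseq p q m 0 k mcard pmap lam t1 0 i - aseq p q m 0 k mcard pmap lam t2 0 (i + s))
          (dig p i (pmap β γ')) (dig p (i + s) (pmap β γ')) (dig p i (pmap β (γ' - 1)))
          (dig_lt hp i _) (dig_lt hp (i + s) _) hDγ' _ hG
      rw [mul_zero] at h0
      exact h0

end mainlem

section final
variable {p q m k : ℕ} {mcard : ℕ → ℕ} {pmap : ℕ → ℕ → ℕ} {lam : ℕ → ZMod q}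

lemma main_sum' (hpp : p.Prime) (hq : 0 < q) (hpq : p ∣ q)
    (hmcard : ∀ β ∈ Finset.Icc 1 k, 1 ≤ mcard β)
    (hmaps : ∀ β ∈ Finset.Icc 1 k, ∀ γ ∈ Finset.Icc 1 (mcard β), pmap β γ ∈ Finset.Icc 1 m)
    (hpart : ∀ l ∈ Finset.Icc 1 m, ∃! bg : ℕ × ℕ,
      bg.1 ∈ Finset.Icc 1 k ∧ bg.2 ∈ Finset.Icc 1 (mcard bg.1) ∧ pmap bg.1 bg.2 = l)
    (t1 t2 s : ℕ) (ht1 : t1 < p ^ k) (ht2 : t2 < p ^ k) (hst : s ≠ 0 ∨ t1 ≠ t2) :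
    ∑ σ ∈ Finset.range (p ^ k), ∑ i ∈ Finset.range (p ^ m - s),
      eomega q (aseq p q m 0 k mcard pmap lam t1 σ (i + s)
        - aseq p q m 0 k mcard pmap lam t2 σ i) = 0 := by
  have h := main_sum (lam := lam) hpp hq hpq hmcard hmaps hpart t2 t1 s ht2 ht1
    (hst.imp id Ne.symm)
  have hconj : ∑ σ ∈ Finset.range (p ^ k), ∑ i ∈ Finset.range (p ^ m - s),
      eomega q (aseq p q m 0 k mcard pmap lam t1 σ (i + s)
        - aseq p q m 0 k mcard pmap lam t2 σ i)
      = (starRingEnd ℂ) (∑ σ ∈ Finset.range (p ^ k), ∑ i ∈ Finset.range (p ^ m - s),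
        eomega q (aseq p q m 0 k mcard pmap lam t2 σ i
          - aseq p q m 0 k mcard pmap lam t1 σ (i + s))) := by
    rw [map_sum]
    refine Finset.sum_congr rfl (fun σ _ => ?_)
    rw [map_sum]
    refine Finset.sum_congr rfl (fun i _ => ?_)
    rw [eomega_conj hq, neg_sub]
  rw [hconj, h, map_zero]

end final


/-- with `δ = 0` the construction yields a `(p^k, p^k, p^m)`-CCC:
each code's autocorrelation sum is `p^(k+m)` at shift 0 and vanishes at every shift
with `1 ≤ |τ| ≤ p^m - 1`, and distinct codes' cross-correlation sums vanish at every
shift with `|τ| ≤ p^m - 1`. -/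
theorem ccc_construction
    (p q m k : ℕ) (hp : p.Prime) (hq : 0 < q) (hpq : p ∣ q)
    (hm : 3 ≤ m) (hk1 : 1 ≤ k) (hk2 : k ≤ m)
    (mcard : ℕ → ℕ) (pmap : ℕ → ℕ → ℕ) (lam : ℕ → ZMod q)
    (hmcard : ∀ β ∈ Finset.Icc 1 k, 1 ≤ mcard β)
    (hmaps : ∀ β ∈ Finset.Icc 1 k, ∀ γ ∈ Finset.Icc 1 (mcard β),
      pmap β γ ∈ Finset.Icc 1 m)
    (hpart : ∀ l ∈ Finset.Icc 1 m, ∃! bg : ℕ × ℕ,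
      bg.1 ∈ Finset.Icc 1 k ∧ bg.2 ∈ Finset.Icc 1 (mcard bg.1) ∧ pmap bg.1 bg.2 = l) :
    (∀ t < p ^ k,
      (∑ σ ∈ Finset.range (p ^ k),
        acorr q (p ^ m) (aseq p q m 0 k mcard pmap lam t σ) 0 = (p : ℂ) ^ (k + m)) ∧
      ∀ τ : ℤ, 1 ≤ τ.natAbs → τ.natAbs ≤ p ^ m - 1 →
        ∑ σ ∈ Finset.range (p ^ k),
          acorr q (p ^ m) (aseq p q m 0 k mcard pmap lam t σ) τ = 0) ∧
    (∀ t₁ < p ^ k, ∀ t₂ < p ^ k, t₁ ≠ t₂ → ∀ τ : ℤ, τ.natAbs ≤ p ^ m - 1 →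
      ∑ σ ∈ Finset.range (p ^ k),
        ccorr q (p ^ m) (aseq p q m 0 k mcard pmap lam t₁ σ)
          (aseq p q m 0 k mcard pmap lam t₂ σ) τ = 0) := by
  refine ⟨fun t ht => ⟨?_, ?_⟩, ?_⟩
  · -- autocorrelation at shift 0
    have hone : ∀ σ ∈ Finset.range (p ^ k),
        acorr q (p ^ m) (aseq p q m 0 k mcard pmap lam t σ) 0 = ((p ^ m : ℕ) : ℂ) := by
      intro σ _
      rw [acorr, ccorr, if_pos (le_refl (0 : ℤ))]
      have hterm : ∀ i ∈ Finset.range (p ^ m - (0 : ℤ).toNat),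
          eomega q (aseq p q m 0 k mcard pmap lam t σ i
            - aseq p q m 0 k mcard pmap lam t σ (i + (0 : ℤ).toNat)) = 1 := by
        intro i _
        rw [Int.toNat_zero, Nat.add_zero, sub_self, eomega_zero]
      rw [Finset.sum_congr rfl hterm, Finset.sum_const, Finset.card_range,
        Int.toNat_zero, Nat.sub_zero, nsmul_eq_mul, mul_one]
    rw [Finset.sum_congr rfl hone, Finset.sum_const, Finset.card_range, nsmul_eq_mul]
    push_cast
    rw [← pow_add]
  · -- autocorrelation at nonzero shifts
    intro τ h1 _
    rcases le_or_gt 0 τ with hτ | hτ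
    · have hs : τ.toNat ≠ 0 := by omega
      have h := main_sum (lam := lam) hp hq hpq hmcard hmaps hpart t t τ.toNat ht ht
        (Or.inl hs)
      simp only [acorr, ccorr, if_pos hτ]
      exact h
    · have h := main_sum' (lam := lam) hp hq hpq hmcard hmaps hpart t t (-τ).toNat ht ht
        (Or.inl (by omega))
      simp only [acorr, ccorr, if_neg (not_le.mpr hτ)]
      exact h
  · -- cross-correlations
    intro t1 ht1 t2 ht2 hne τ _
    rcases le_or_gt 0 τ with hτ | hτ
    · have h := main_sum (lam := lam) hp hq hpq hmcard hmaps hpart t1 t2 τ.toNat ht1 ht2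
        (Or.inr hne)
      simp only [ccorr, if_pos hτ]
      exact h
    · have h := main_sum' (lam := lam) hp hq hpq hmcard hmaps hpart t1 t2 (-τ).toNat ht1 ht2
        (Or.inr hne)
      simp only [ccorr, if_neg (not_le.mpr hτ)]
      exact h
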